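/- Upper bound validity for the BnB pole search: let n ∈ ℝ³ be nonzero, τ ≥ 0 with τ ≤ ‖n‖, and set ξ = arcsin(τ/‖n‖). If h, h_c are unit vectors with ∠(h, h_c) ≤ α, and |⟪n, h⟫| ≤ τ, then |⟪n, h_c⟫| ≤ ‖n‖·sin(α + ξ) whenever α + ξ < π/2, and trivially |⟪n, h_c⟫| ≤ ‖n‖ always. Hence every unit vector in the branch satisfying the inlier constraint is counted by the upper-bound test at the branch center. -/
import Mathlib


open Real RealInnerProductSpace

theorem bnb_upper_bound_validity
    (n h hc : EuclideanSpace ℝ (Fin 3))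
    (hn : ‖n‖ > 0) (hh : ‖h‖ = 1) (hhc : ‖hc‖ = 1)
    (τ α ξ : ℝ) (hτ0 : 0 ≤ τ) (hτn : τ ≤ ‖n‖)
    (hξ : ξ = Real.arcsin (τ / ‖n‖))
    (hangle : Real.arccos ⟪h, hc⟫ ≤ α)
    (hin : |⟪n, h⟫| ≤ τ) :
    (α + ξ < π / 2 → |⟪n, hc⟫| ≤ ‖n‖ * Real.sin (α + ξ)) ∧ |⟪n, hc⟫| ≤ ‖n‖ := by
  have htriv : |⟪n, hc⟫| ≤ ‖n‖ := by
    have := abs_real_inner_le_norm n hc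
    rwa [hhc, mul_one] at this
  refine ⟨fun hlt => ?_, htriv⟩
  set a : ℝ := ⟪n, h⟫ with ha_def
  set c : ℝ := ⟪h, hc⟫ with hc_def
  have hc1 : |c| ≤ 1 := by
    have := abs_real_inner_le_norm h hc
    rw [hh, hhc] at this
    simpa using this
  have ha1 : |a| ≤ ‖n‖ := by
    have := abs_real_inner_le_norm n h
    rwa [hh, mul_one] at this
  have hasq : a ^ 2 ≤ ‖n‖ ^ 2 := by
    rw [← sq_abs a]; exact pow_le_pow_left₀ (abs_nonneg _) ha1 2
  have hcsq : c ^ 2 ≤ 1 := by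
    rw [← sq_abs c]; nlinarith [abs_nonneg c]
  have hhsq : ⟪h, h⟫ = (1 : ℝ) := by
    rw [real_inner_self_eq_norm_sq, hh]; norm_num
  have hw : ⟪n - a • h, hc - c • h⟫ = ⟪n, hc⟫ - a * c := by
    simp only [inner_sub_left, inner_sub_right, real_inner_smul_left, real_inner_smul_right,
      hhsq, ← ha_def, ← hc_def, real_inner_comm h n]
    ring
  have hnormw : ‖n - a • h‖ = Real.sqrt (‖n‖ ^ 2 - a ^ 2) := by
    rw [← Real.sqrt_sq (norm_nonneg (n - a • h))]
    congr 1
    rw [norm_sub_sq_real, real_inner_smul_right, norm_smul, hh, ← ha_def]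
    simp [Real.norm_eq_abs, sq_abs]
    ring
  have hnormv : ‖hc - c • h‖ = Real.sqrt (1 - c ^ 2) := by
    rw [← Real.sqrt_sq (norm_nonneg (hc - c • h))]
    congr 1
    have hcomm : (⟪hc, h⟫ : ℝ) = c := by rw [real_inner_comm]
    rw [norm_sub_sq_real, real_inner_smul_right, norm_smul, hh, hhc, hcomm]
    simp [Real.norm_eq_abs, sq_abs]
    ring
  have hkey : |⟪n, hc⟫| ≤ |c| * |a| + Real.sqrt (‖n‖ ^ 2 - a ^ 2) * Real.sqrt (1 - c ^ 2) := by
    have h1 : |⟪n - a • h, hc - c • h⟫| ≤ Real.sqrt (‖n‖ ^ 2 - a ^ 2) * Real.sqrt (1 - c ^ 2) := by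
      rw [← hnormw, ← hnormv]; exact abs_real_inner_le_norm _ _
    rw [hw] at h1
    calc |⟪n, hc⟫| = |a * c + (⟪n, hc⟫ - a * c)| := by ring_nf
      _ ≤ |a * c| + |⟪n, hc⟫ - a * c| := abs_add_le _ _
      _ ≤ |c| * |a| + Real.sqrt (‖n‖ ^ 2 - a ^ 2) * Real.sqrt (1 - c ^ 2) := by
          rw [abs_mul]; exact add_le_add (le_of_eq (mul_comm _ _)) h1
  -- angles
  set φ := Real.arcsin (|a| / ‖n‖) with hφ_def
  set β := Real.arccos c with hβ_def
  have hξ0 : 0 ≤ ξ := by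
    rw [hξ]; exact Real.arcsin_nonneg.2 (div_nonneg hτ0 hn.le)
  have hα0 : 0 ≤ α := le_trans (Real.arccos_nonneg _) hangle
  have hratio1 : |a| / ‖n‖ ≤ 1 := (div_le_one hn).2 ha1
  have hratio0 : 0 ≤ |a| / ‖n‖ := div_nonneg (abs_nonneg _) hn.le
  have hsinφ : ‖n‖ * Real.sin φ = |a| := by
    rw [hφ_def, Real.sin_arcsin (by linarith) hratio1]
    field_simp
  have hcosφ : ‖n‖ * Real.cos φ = Real.sqrt (‖n‖ ^ 2 - a ^ 2) := by
    rw [hφ_def, Real.cos_arcsin]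
    have : (1 : ℝ) - (|a| / ‖n‖) ^ 2 = (‖n‖ ^ 2 - a ^ 2) / ‖n‖ ^ 2 := by
      rw [div_pow, sq_abs]; field_simp
    rw [this, Real.sqrt_div (by nlinarith : (0:ℝ) ≤ ‖n‖ ^ 2 - a ^ 2), Real.sqrt_sq hn.le]
    field_simp
  have hφ0 : 0 ≤ φ := Real.arcsin_nonneg.2 hratio0
  have hφξ : φ ≤ ξ := by
    rw [hφ_def, hξ]
    apply Real.monotone_arcsin
    gcongr
  have hβ0 : 0 ≤ β := Real.arccos_nonneg c
  have hβα : β ≤ α := hangle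
  have hcosβ : Real.cos β = c := Real.cos_arccos (by linarith [neg_abs_le c]) (by linarith [le_abs_self c])
  have hsinβ : Real.sin β = Real.sqrt (1 - c ^ 2) := by
    rw [hβ_def, Real.sin_arccos]
  have hcosβpos : 0 < Real.cos β :=
    Real.cos_pos_of_mem_Ioo ⟨by linarith [Real.pi_pos], by linarith⟩
  have habsc : |c| = Real.cos β := by
    rw [hcosβ] at hcosβpos ⊢
    exact abs_of_pos hcosβpos
  have hrhs : |c| * |a| + Real.sqrt (‖n‖ ^ 2 - a ^ 2) * Real.sqrt (1 - c ^ 2)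
      = ‖n‖ * Real.sin (φ + β) := by
    rw [Real.sin_add, habsc, ← hsinφ, ← hcosφ, ← hsinβ]
    ring
  have hmono : Real.sin (φ + β) ≤ Real.sin (α + ξ) := by
    apply Real.sin_le_sin_of_le_of_le_pi_div_two (by linarith [Real.pi_pos]) (le_of_lt hlt)
    linarith
  rw [hrhs] at hkey
  calc |⟪n, hc⟫| ≤ ‖n‖ * Real.sin (φ + β) := hkey
    _ ≤ ‖n‖ * Real.sin (α + ξ) := by
        exact mul_le_mul_of_nonneg_left hmono hn.le
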